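/- Let μ be a probability measure on [0,1)^d that is (σ;T)-regular for some σ = (σ_1,…,σ_ℓ) ∈ [0,d]^ℓ and T ∈ ℕ, and let X be its dyadic support. Then: (i) for every dyadic cube Q of side 2^{−jT} with μ(Q) > 0, 2^{−j} 2^{−T(σ_1+⋯+σ_j)} ≤ μ(Q) ≤ 2^{−T(σ_1+⋯+σ_j)}; (ii) writing m = Tℓ and β = (σ_1+⋯+σ_ℓ)/ℓ, the number N(X,m) of dyadic cubes of side 2^{−m} meeting X satisfies 2^{βm} ≤ N(X,m) ≤ 2^{(β+1/T)m}; (iii) 2^{−ℓ} μ ≤ 1_X/|X| ≤ 2^{ℓ} μ as measures, where |X| is the Lebesgue measure of X. -/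

import Mathlib

open MeasureTheory ENNReal

/-- The half-open dyadic cube of side `2^{-j}` in `ℝ^d` indexed by `k : Fin d → ℤ`. -/
def dyCube (d j : ℕ) (k : Fin d → ℤ) : Set (Fin d → ℝ) :=
  {x | ∀ i, (k i : ℝ) / 2 ^ j ≤ x i ∧ x i < ((k i : ℝ) + 1) / 2 ^ j}

/-- The index of the dyadic cube of side `2^{-j}` containing `x`. -/
noncomputable def dyIdx (d j : ℕ) (x : Fin d → ℝ) : Fin d → ℤ := fun i => ⌊x i * 2 ^ j⌋

/-- The dyadic support of `μ`: points all of whose dyadic cubes have positive measure. -/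
def dySupp (d : ℕ) (μ : Measure (Fin d → ℝ)) : Set (Fin d → ℝ) :=
  {x | ∀ j : ℕ, 0 < μ (dyCube d j (dyIdx d j x))}

/-- `μ` is `(σ; T)`-regular (with `ℓ` levels): for every dyadic cube `Q` of side `2^{-jT}`
(`1 ≤ j ≤ ℓ`) of positive measure, `μ(Q) ≤ 2^{-Tσ_j} μ(Q̂) ≤ 2 μ(Q)`, where `Q̂` is the
parent cube of side `2^{-(j-1)T}`. -/
def IsRegularMeasure (d T ℓ : ℕ) (σ : ℕ → ℝ) (μ : Measure (Fin d → ℝ)) : Prop :=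
  ∀ j : ℕ, 1 ≤ j → j ≤ ℓ → ∀ k : Fin d → ℤ, 0 < μ (dyCube d (j * T) k) →
    μ (dyCube d (j * T) k) ≤
      ENNReal.ofReal ((2 : ℝ) ^ (-(T : ℝ) * σ j)) *
        μ (dyCube d ((j - 1) * T) (fun i => Int.fdiv (k i) (2 ^ T))) ∧
    ENNReal.ofReal ((2 : ℝ) ^ (-(T : ℝ) * σ j)) *
        μ (dyCube d ((j - 1) * T) (fun i => Int.fdiv (k i) (2 ^ T))) ≤
      2 * μ (dyCube d (j * T) k)

section Aux

lemma mem_dyCube {d j : ℕ} {k : Fin d → ℤ} {x : Fin d → ℝ} :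
    x ∈ dyCube d j k ↔ ∀ i, (k i : ℝ) ≤ x i * 2 ^ j ∧ x i * 2 ^ j < k i + 1 := by
  have h2 : (0:ℝ) < 2 ^ j := by positivity
  constructor <;> intro h i <;> obtain ⟨h1', h2'⟩ := h i <;> constructor
  · rwa [div_le_iff₀ h2] at h1'
  · rwa [lt_div_iff₀ h2] at h2'
  · rwa [div_le_iff₀ h2]
  · rwa [lt_div_iff₀ h2]

lemma mem_dyCube_dyIdx {d j : ℕ} (x : Fin d → ℝ) : x ∈ dyCube d j (dyIdx d j x) :=
  mem_dyCube.2 fun i => ⟨Int.floor_le _, Int.lt_floor_add_one _⟩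

lemma dyIdx_eq_of_mem {d j : ℕ} {k : Fin d → ℤ} {x : Fin d → ℝ}
    (h : x ∈ dyCube d j k) : dyIdx d j x = k := by
  funext i
  obtain ⟨h1, h2⟩ := mem_dyCube.1 h i
  exact Int.floor_eq_iff.2 ⟨h1, h2⟩

lemma dyCube_disjoint {d j : ℕ} {k k' : Fin d → ℤ} (h : k ≠ k') :
    Disjoint (dyCube d j k) (dyCube d j k') := by
  rw [Set.disjoint_left]
  intro x hx hx'
  exact h ((dyIdx_eq_of_mem hx).symm.trans (dyIdx_eq_of_mem hx'))

lemma fdiv_floor_mul (r : ℝ) (b : ℕ) : (⌊r * 2 ^ b⌋).fdiv (2 ^ b) = ⌊r⌋ := by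
  have hb : (0:ℤ) < 2 ^ b := by positivity
  have hbR : (0:ℝ) < 2 ^ b := by positivity
  rw [Int.fdiv_eq_ediv_of_nonneg _ hb.le]
  refine le_antisymm ?_ ?_
  · rw [← Int.lt_add_one_iff, Int.ediv_lt_iff_lt_mul hb, Int.floor_lt]
    push_cast
    nlinarith [Int.lt_floor_add_one r]
  · rw [Int.le_ediv_iff_mul_le hb, Int.le_floor]
    push_cast
    exact mul_le_mul_of_nonneg_right (Int.floor_le r) hbR.le

lemma dyIdx_add (d a b : ℕ) (x : Fin d → ℝ) (i : Fin d) :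
    dyIdx d a x i = (dyIdx d (a + b) x i).fdiv (2 ^ b) := by
  unfold dyIdx
  rw [pow_add, ← mul_assoc, fdiv_floor_mul]

lemma dyCube_subset {d a b : ℕ} (k : Fin d → ℤ) :
    dyCube d (a + b) k ⊆ dyCube d a (fun i => (k i).fdiv (2 ^ b)) := by
  intro x hx
  have hk := dyIdx_eq_of_mem hx
  have : (fun i => (k i).fdiv (2 ^ b)) = dyIdx d a x := by
    funext i; rw [dyIdx_add d a b x i, hk]
  rw [this]
  exact mem_dyCube_dyIdx x

lemma dyCube_idx_mono {d j j' : ℕ} (h : j ≤ j') (x : Fin d → ℝ) :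
    dyCube d j' (dyIdx d j' x) ⊆ dyCube d j (dyIdx d j x) := by
  obtain ⟨b, rfl⟩ := Nat.exists_eq_add_of_le h
  intro y hy
  have h2 := dyCube_subset (dyIdx d (j + b) x) hy
  have h3 : (fun i => (dyIdx d (j + b) x i).fdiv (2 ^ b)) = dyIdx d j x :=
    funext fun i => (dyIdx_add d j b x i).symm
  rwa [h3] at h2

lemma dyCube_eq_pi (d j : ℕ) (k : Fin d → ℤ) :
    dyCube d j k = Set.univ.pi fun i => Set.Ico ((k i : ℝ)/2^j) (((k i : ℝ)+1)/2^j) := by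
  ext x; simp [dyCube, Set.mem_pi, Set.mem_Ico]

lemma measurableSet_dyCube (d j : ℕ) (k : Fin d → ℤ) : MeasurableSet (dyCube d j k) := by
  rw [dyCube_eq_pi]
  exact MeasurableSet.univ_pi fun i => measurableSet_Ico

lemma volume_dyCube (d j : ℕ) (k : Fin d → ℤ) :
    volume (dyCube d j k) = (ENNReal.ofReal ((2:ℝ)^j)⁻¹) ^ d := by
  rw [dyCube_eq_pi, volume_pi_pi]
  have : ∀ i : Fin d, volume (Set.Ico ((k i : ℝ)/2^j) (((k i : ℝ)+1)/2^j))
      = ENNReal.ofReal ((2:ℝ)^j)⁻¹ := by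
    intro i
    rw [Real.volume_Ico]
    congr 1
    field_simp
    ring
  simp [this]

lemma volume_dyCube_pos (d j : ℕ) (k : Fin d → ℤ) : 0 < volume (dyCube d j k) := by
  rw [volume_dyCube, pos_iff_ne_zero]
  exact pow_ne_zero d (ENNReal.ofReal_pos.2 (by positivity)).ne'

lemma volume_dyCube_ne_top (d j : ℕ) (k : Fin d → ℤ) : volume (dyCube d j k) ≠ ∞ := by
  rw [volume_dyCube]
  exact pow_ne_top ENNReal.ofReal_ne_top

lemma dyCube_nonempty (d j : ℕ) (k : Fin d → ℤ) : (dyCube d j k).Nonempty := by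
  refine ⟨fun i => (k i : ℝ) / 2 ^ j, mem_dyCube.2 fun i => ?_⟩
  rw [div_mul_cancel₀ _ (by positivity : (2:ℝ)^j ≠ 0)]
  exact ⟨le_refl _, lt_add_one _⟩

lemma box_eq (d : ℕ) : {x : Fin d → ℝ | ∀ i, 0 ≤ x i ∧ x i < 1} = dyCube d 0 (fun _ => 0) := by
  ext x; simp [dyCube]

lemma measure_box (d : ℕ) (μ : Measure (Fin d → ℝ)) [IsProbabilityMeasure μ]
    (hμbox : μ {x | ¬ ∀ i, 0 ≤ x i ∧ x i < 1} = 0) :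
    μ (dyCube d 0 (fun _ => 0)) = 1 := by
  have hc : {x : Fin d → ℝ | ¬ ∀ i, 0 ≤ x i ∧ x i < 1}
      = (dyCube d 0 (fun _ => 0))ᶜ := by
    rw [← box_eq]; rfl
  rw [hc] at hμbox
  have := measure_add_measure_compl (μ := μ) (measurableSet_dyCube d 0 (fun _ => 0))
  rw [hμbox, add_zero] at this
  simpa using this

lemma level0_cube (d : ℕ) (μ : Measure (Fin d → ℝ)) [IsProbabilityMeasure μ]
    (hμbox : μ {x | ¬ ∀ i, 0 ≤ x i ∧ x i < 1} = 0) (k : Fin d → ℤ)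
    (hk : 0 < μ (dyCube d 0 k)) : μ (dyCube d 0 k) = 1 := by
  rcases eq_or_ne k (fun _ => 0) with rfl | hne
  · exact measure_box d μ hμbox
  · exfalso
    have hdisj := dyCube_disjoint (d := d) (j := 0) hne
    have hsub : dyCube d 0 k ⊆ (dyCube d 0 (fun _ => 0))ᶜ :=
      Set.subset_compl_iff_disjoint_left.2 hdisj.symm
    have hc : μ ((dyCube d 0 (fun _ => 0))ᶜ) = 0 := by
      have hc' : {x : Fin d → ℝ | ¬ ∀ i, 0 ≤ x i ∧ x i < 1}
          = (dyCube d 0 (fun _ => 0))ᶜ := by rw [← box_eq]; rfl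
      rw [← hc']; exact hμbox
    exact absurd (le_antisymm ((measure_mono hsub).trans hc.le) (zero_le)) hk.ne'

lemma part_i (d T ℓ : ℕ) (σ : ℕ → ℝ) (μ : Measure (Fin d → ℝ))
    [IsProbabilityMeasure μ] (hμbox : μ {x | ¬ ∀ i, 0 ≤ x i ∧ x i < 1} = 0)
    (hreg : IsRegularMeasure d T ℓ σ μ) :
    ∀ j : ℕ, j ≤ ℓ → ∀ k, 0 < μ (dyCube d (j*T) k) →
      ENNReal.ofReal ((2:ℝ)^(-(j:ℝ)) * (2:ℝ)^(-(T:ℝ) * ∑ i ∈ Finset.Icc 1 j, σ i))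
          ≤ μ (dyCube d (j*T) k) ∧
      μ (dyCube d (j*T) k) ≤ ENNReal.ofReal ((2:ℝ)^(-(T:ℝ) * ∑ i ∈ Finset.Icc 1 j, σ i)) := by
  intro j
  induction j with
  | zero =>
    intro _ k hk
    have h1 : μ (dyCube d (0*T) k) = 1 := by
      rw [zero_mul] at hk ⊢; exact level0_cube d μ hμbox k hk
    rw [zero_mul] at h1
    simp [h1]
  | succ j ih =>
    intro hjl k hk
    have hj : j ≤ ℓ := (Nat.le_succ j).trans hjl
    obtain ⟨hup, hlow⟩ := hreg (j+1) (Nat.le_add_left 1 j) hjl k hk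
    rw [Nat.add_sub_cancel] at hup hlow
    have hsub : dyCube d ((j+1)*T) k ⊆ dyCube d (j*T) (fun i => (k i).fdiv (2^T)) := by
      have : (j+1)*T = j*T + T := by ring
      rw [this]; exact dyCube_subset k
    have hpar : 0 < μ (dyCube d (j*T) (fun i => (k i).fdiv (2^T))) :=
      hk.trans_le (measure_mono hsub)
    obtain ⟨ihl, ihu⟩ := ih hj _ hpar
    set Qp := μ (dyCube d (j*T) (fun i => (k i).fdiv (2^T))) with hQp
    have hsum : ∑ i ∈ Finset.Icc 1 (j+1), σ i = (∑ i ∈ Finset.Icc 1 j, σ i) + σ (j+1) :=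
      Finset.sum_Icc_succ_top (Nat.le_add_left 1 j) σ
    have hA : (2:ℝ)^(-(T:ℝ) * ∑ i ∈ Finset.Icc 1 (j+1), σ i)
        = (2:ℝ)^(-(T:ℝ) * σ (j+1)) * (2:ℝ)^(-(T:ℝ) * ∑ i ∈ Finset.Icc 1 j, σ i) := by
      rw [← Real.rpow_add (by norm_num), hsum]; ring_nf
    constructor
    · have h2 : ENNReal.ofReal ((2:ℝ)^(-(T:ℝ)*σ (j+1)))
          * ENNReal.ofReal ((2:ℝ)^(-(j:ℝ)) * (2:ℝ)^(-(T:ℝ) * ∑ i ∈ Finset.Icc 1 j, σ i))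
          ≤ 2 * μ (dyCube d ((j+1)*T) k) :=
        le_trans (mul_le_mul_right ihl _) hlow
      rw [← ENNReal.ofReal_mul (by positivity)] at h2
      have key : (2:ℝ)^(-(T:ℝ)*σ (j+1)) * ((2:ℝ)^(-(j:ℝ)) * (2:ℝ)^(-(T:ℝ) * ∑ i ∈ Finset.Icc 1 j, σ i))
          = 2 * ((2:ℝ)^(-((j:ℕ)+1:ℝ)) * (2:ℝ)^(-(T:ℝ) * ∑ i ∈ Finset.Icc 1 (j+1), σ i)) := by
        rw [hA]
        have : (2:ℝ)^(-((j:ℕ)+1:ℝ)) = 2⁻¹ * (2:ℝ)^(-(j:ℝ)) := by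
          rw [neg_add, Real.rpow_add (by norm_num), Real.rpow_neg_one]; ring
        rw [this]; ring
      rw [key, ENNReal.ofReal_mul (by norm_num), ENNReal.ofReal_ofNat] at h2
      have h3 := (ENNReal.mul_le_mul_iff_right (a := 2) (by norm_num) (by norm_num)).1 h2
      convert h3 using 3
      push_cast; ring
    · calc μ (dyCube d ((j+1)*T) k)
          ≤ ENNReal.ofReal ((2:ℝ)^(-(T:ℝ)*σ (j+1))) * Qp := hup
        _ ≤ ENNReal.ofReal ((2:ℝ)^(-(T:ℝ)*σ (j+1)))
              * ENNReal.ofReal ((2:ℝ)^(-(T:ℝ) * ∑ i ∈ Finset.Icc 1 j, σ i)) :=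
            mul_le_mul_right ihu _
        _ = ENNReal.ofReal ((2:ℝ)^(-(T:ℝ) * ∑ i ∈ Finset.Icc 1 (j+1), σ i)) := by
            rw [← ENNReal.ofReal_mul (by positivity), hA]

lemma pos_cube_idx_range (d j : ℕ) (μ : Measure (Fin d → ℝ))
    (hμbox : μ {x | ¬ ∀ i, 0 ≤ x i ∧ x i < 1} = 0) (k : Fin d → ℤ)
    (hk : 0 < μ (dyCube d j k)) : ∀ i, 0 ≤ k i ∧ k i < 2 ^ j := by
  -- the cube must intersect the box
  have hbox : μ (dyCube d j k ∩ {x | ∀ i, 0 ≤ x i ∧ x i < 1}) ≠ 0 := by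
    intro h0
    have h1 : μ (dyCube d j k) ≤ μ (dyCube d j k ∩ {x | ∀ i, 0 ≤ x i ∧ x i < 1})
        + μ (dyCube d j k \ {x | ∀ i, 0 ≤ x i ∧ x i < 1}) :=
      measure_le_inter_add_diff μ _ _
    have h2 : μ (dyCube d j k \ {x | ∀ i, 0 ≤ x i ∧ x i < 1}) = 0 := by
      refine le_antisymm (le_trans (measure_mono ?_) hμbox.le) (zero_le)
      intro x hx; exact hx.2
    rw [h0, h2, add_zero] at h1
    exact absurd (le_antisymm h1 (zero_le)) hk.ne'
  obtain ⟨x, hxQ, hxB⟩ := nonempty_of_measure_ne_zero hbox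
  have hk' : k = dyIdx d j x := (dyIdx_eq_of_mem hxQ).symm
  intro i
  have hx0 : 0 ≤ x i := (hxB i).1
  have hx1 : x i < 1 := (hxB i).2
  rw [hk']
  constructor
  · exact Int.floor_nonneg.2 (by positivity)
  · show (⌊x i * (2:ℝ)^j⌋) < 2^j
    rw [Int.floor_lt]
    push_cast
    have : x i * 2 ^ j < 1 * 2 ^ j := by
      exact mul_lt_mul_of_pos_right hx1 (by positivity)
    linarith

lemma dyCube_subset_box {d j : ℕ} {k : Fin d → ℤ} (hk : ∀ i, 0 ≤ k i ∧ k i < 2 ^ j) :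
    dyCube d j k ⊆ {x | ∀ i, 0 ≤ x i ∧ x i < 1} := by
  intro x hx i
  obtain ⟨h1, h2⟩ := hx i
  have h2j : (0:ℝ) < 2 ^ j := by positivity
  constructor
  · refine le_trans ?_ h1
    have : (0:ℝ) ≤ (k i : ℝ) := by exact_mod_cast (hk i).1
    positivity
  · refine lt_of_lt_of_le h2 ?_
    rw [div_le_one h2j]
    have : (k i : ℝ) + 1 ≤ (2:ℝ)^j := by
      have := (hk i).2
      have : (k i : ℝ) < (2:ℝ)^j := by exact_mod_cast this
      have hki : k i + 1 ≤ 2^j := (hk i).2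
      exact_mod_cast hki
    linarith

/-- Membership in the dyadic support from a positive flat cube. -/
lemma mem_dySupp_of_pos {d m : ℕ} (μ : Measure (Fin d → ℝ))
    (hμflat : ∀ k : Fin d → ℤ, ∃ c : ℝ≥0∞,
      μ.restrict (dyCube d m k) = c • volume.restrict (dyCube d m k))
    (k : Fin d → ℤ) (hk : 0 < μ (dyCube d m k)) {x : Fin d → ℝ}
    (hx : x ∈ dyCube d m k) : x ∈ dySupp d μ := by
  intro j
  have hkidx : dyCube d m k = dyCube d m (dyIdx d m x) := by rw [dyIdx_eq_of_mem hx]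
  rcases le_or_gt j m with hj | hj
  · exact hk.trans_le (measure_mono (hkidx ▸ (hkidx ▸ dyCube_idx_mono hj x :
      dyCube d m (dyIdx d m x) ⊆ dyCube d j (dyIdx d j x))))
  · obtain ⟨c, hc⟩ := hμflat k
    have hres : ∀ s : Set (Fin d → ℝ), MeasurableSet s →
        μ (s ∩ dyCube d m k) = c * volume (s ∩ dyCube d m k) := by
      intro s hs
      have := congrArg (fun ν : Measure (Fin d → ℝ) => ν s) hc
      simpa [Measure.restrict_apply hs] using this
    have hQ : μ (dyCube d m k) = c * volume (dyCube d m k) := by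
      have := hres _ (measurableSet_dyCube d m k)
      simpa using this
    have hcne : c ≠ 0 := by
      intro h0
      rw [h0, zero_mul] at hQ
      exact hk.ne' hQ
    have hsmall : dyCube d j (dyIdx d j x) ⊆ dyCube d m k := by
      rw [hkidx]; exact dyCube_idx_mono hj.le x
    have h1 : μ (dyCube d j (dyIdx d j x)) = c * volume (dyCube d j (dyIdx d j x)) := by
      have := hres _ (measurableSet_dyCube d j (dyIdx d j x))
      rwa [Set.inter_eq_self_of_subset_left hsmall] at this
    rw [h1]
    exact ENNReal.mul_pos hcne (volume_dyCube_pos d j (dyIdx d j x)).ne'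

end Aux

/-- properties of regular measures. Let `μ` be a `(σ;T)`-regular
`2^{-m}`-measure on `[0,1)^d` with dyadic support `X`, where `m = Tℓ`. Then:
(i) cubes of side `2^{-jT}` of positive measure have measure comparable to
`2^{-T(σ_1+⋯+σ_j)}`; (ii) the number of `2^{-m}`-cubes meeting `X` is between `2^{βm}` and
`2^{(β+1/T)m}` where `β = (σ_1+⋯+σ_ℓ)/ℓ`; (iii) `2^{-ℓ} μ ≤ 1_X/|X| ≤ 2^{ℓ} μ`. -/
theorem regular_measure_properties (d T ℓ : ℕ) (hd : 1 ≤ d) (hT : 1 ≤ T) (hℓ : 1 ≤ ℓ)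
    (σ : ℕ → ℝ) (hσ : ∀ j, 1 ≤ j → j ≤ ℓ → 0 ≤ σ j ∧ σ j ≤ d)
    (μ : Measure (Fin d → ℝ)) [IsProbabilityMeasure μ]
    (hμbox : μ {x | ¬ ∀ i, 0 ≤ x i ∧ x i < 1} = 0)
    (hμflat : ∀ k : Fin d → ℤ, ∃ c : ℝ≥0∞,
      μ.restrict (dyCube d (T * ℓ) k) = c • volume.restrict (dyCube d (T * ℓ) k))
    (hreg : IsRegularMeasure d T ℓ σ μ) :
    -- (i)
    (∀ j : ℕ, 1 ≤ j → j ≤ ℓ → ∀ k : Fin d → ℤ, 0 < μ (dyCube d (j * T) k) →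
      ENNReal.ofReal ((2 : ℝ) ^ (-(j : ℝ)) *
          (2 : ℝ) ^ (-(T : ℝ) * ∑ i ∈ Finset.Icc 1 j, σ i)) ≤ μ (dyCube d (j * T) k) ∧
      μ (dyCube d (j * T) k) ≤
        ENNReal.ofReal ((2 : ℝ) ^ (-(T : ℝ) * ∑ i ∈ Finset.Icc 1 j, σ i))) ∧
    -- (ii)
    ({k : Fin d → ℤ | (dyCube d (T * ℓ) k ∩ dySupp d μ).Nonempty}.Finite ∧
      (2 : ℝ) ^ (((∑ i ∈ Finset.Icc 1 ℓ, σ i) / ℓ) * (T * ℓ : ℕ)) ≤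
        ({k : Fin d → ℤ | (dyCube d (T * ℓ) k ∩ dySupp d μ).Nonempty}.ncard : ℝ) ∧
      (({k : Fin d → ℤ | (dyCube d (T * ℓ) k ∩ dySupp d μ).Nonempty}.ncard : ℝ)) ≤
        (2 : ℝ) ^ (((∑ i ∈ Finset.Icc 1 ℓ, σ i) / ℓ + 1 / (T : ℝ)) * (T * ℓ : ℕ))) ∧
    -- (iii)
    (∀ S : Set (Fin d → ℝ), MeasurableSet S →
      ((2 : ℝ≥0∞) ^ ℓ)⁻¹ * μ S ≤ (volume (dySupp d μ))⁻¹ * volume (S ∩ dySupp d μ) ∧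
      (volume (dySupp d μ))⁻¹ * volume (S ∩ dySupp d μ) ≤ (2 : ℝ≥0∞) ^ ℓ * μ S) := by
  
  classical
  have hℓ0 : (ℓ:ℝ) ≠ 0 := Nat.cast_ne_zero.2 (by omega)
  have hT0 : (T:ℝ) ≠ 0 := Nat.cast_ne_zero.2 (by omega)
  set m := T * ℓ with hmdef
  set Sg : ℝ := ∑ i ∈ Finset.Icc 1 ℓ, σ i with hSgdef
  set A : ℝ := (2:ℝ)^(-(T:ℝ) * Sg) with hAdef
  set a : ℝ := (2:ℝ)^(-(ℓ:ℝ)) * A with hadef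
  have hApos : 0 < A := Real.rpow_pos_of_pos (by norm_num) _
  have hapos : 0 < a := mul_pos (Real.rpow_pos_of_pos (by norm_num) _) hApos
  have hmain : ∀ k, 0 < μ (dyCube d m k) →
      ENNReal.ofReal a ≤ μ (dyCube d m k) ∧ μ (dyCube d m k) ≤ ENNReal.ofReal A := by
    intro k hk
    have hmm : m = ℓ * T := by rw [hmdef, mul_comm]
    rw [hmm] at hk ⊢
    exact part_i d T ℓ σ μ hμbox hreg ℓ le_rfl k hk
  set Bf : Finset (Fin d → ℤ) := Fintype.piFinset fun _ => Finset.Ico (0:ℤ) (2^m) with hBfdef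
  set Pf : Finset (Fin d → ℤ) := Bf.filter (fun k => 0 < μ (dyCube d m k)) with hPfdef
  have hmemBf : ∀ k, 0 < μ (dyCube d m k) → k ∈ Bf := by
    intro k hk
    rw [hBfdef, Fintype.mem_piFinset]
    intro i
    rw [Finset.mem_Ico]
    exact pos_cube_idx_range d m μ hμbox k hk i
  have hmemPf : ∀ k, k ∈ Pf ↔ 0 < μ (dyCube d m k) := by
    intro k
    rw [hPfdef, Finset.mem_filter]
    exact ⟨fun h => h.2, fun h => ⟨hmemBf k h, h⟩⟩
  have hboxmeas : MeasurableSet {x : Fin d → ℝ | ∀ i, 0 ≤ x i ∧ x i < 1} := by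
    rw [box_eq]; exact measurableSet_dyCube d 0 _
  have hcover : ∀ S : Set (Fin d → ℝ), MeasurableSet S →
      μ S = ∑ k ∈ Pf, μ (S ∩ dyCube d m k) := by
    intro S hS
    have h1 : μ S = μ (S ∩ {x | ∀ i, 0 ≤ x i ∧ x i < 1}) := by
      have h2 := measure_inter_add_diff (μ := μ) S hboxmeas
      have h3 : μ (S \ {x : Fin d → ℝ | ∀ i, 0 ≤ x i ∧ x i < 1}) = 0 :=
        le_antisymm ((measure_mono (fun x hx => hx.2)).trans hμbox.le) (zero_le)
      rw [h3, add_zero] at h2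
      exact h2.symm
    have h4 : S ∩ {x : Fin d → ℝ | ∀ i, 0 ≤ x i ∧ x i < 1} = ⋃ k ∈ Bf, S ∩ dyCube d m k := by
      ext x
      simp only [Set.mem_inter_iff, Set.mem_iUnion, exists_prop, Set.mem_setOf_eq]
      constructor
      · rintro ⟨hxS, hxB⟩
        refine ⟨dyIdx d m x, ?_, hxS, mem_dyCube_dyIdx x⟩
        rw [hBfdef, Fintype.mem_piFinset]
        intro i
        rw [Finset.mem_Ico]
        constructor
        · exact Int.floor_nonneg.2 (by have := (hxB i).1; positivity)
        · show (⌊x i * (2:ℝ)^m⌋) < 2^m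
          rw [Int.floor_lt]
          push_cast
          have h5 : x i * 2 ^ m < 1 * 2 ^ m :=
            mul_lt_mul_of_pos_right (hxB i).2 (by positivity)
          linarith
      · rintro ⟨k, hkB, hxS, hxQ⟩
        refine ⟨hxS, dyCube_subset_box ?_ hxQ⟩
        intro i
        have := Fintype.mem_piFinset.1 (hBfdef ▸ hkB) i
        rwa [Finset.mem_Ico] at this
    have h5 : μ (⋃ k ∈ Bf, S ∩ dyCube d m k) = ∑ k ∈ Bf, μ (S ∩ dyCube d m k) := by
      refine measure_biUnion_finset ?_ (fun k _ => hS.inter (measurableSet_dyCube d m k))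
      intro k _ k' _ hne
      exact (dyCube_disjoint hne).mono Set.inter_subset_right Set.inter_subset_right
    have h6 : ∑ k ∈ Pf, μ (S ∩ dyCube d m k) = ∑ k ∈ Bf, μ (S ∩ dyCube d m k) := by
      rw [hPfdef]
      refine Finset.sum_filter_of_ne ?_
      intro k _ hne
      rw [pos_iff_ne_zero]
      intro h0
      exact hne (le_antisymm ((measure_mono Set.inter_subset_right).trans h0.le) (zero_le))
    rw [h1, h4, h5, h6]
  have hsum1 : ∑ k ∈ Pf, μ (dyCube d m k) = 1 := by
    have h := hcover Set.univ MeasurableSet.univ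
    simp only [Set.univ_inter] at h
    rw [← h, measure_univ]
  have hPfne : Pf.Nonempty := by
    by_contra h
    rw [Finset.not_nonempty_iff_eq_empty] at h
    rw [h, Finset.sum_empty] at hsum1
    exact one_ne_zero hsum1.symm
  set N := Pf.card with hNdef
  have hN1 : 1 ≤ N := Finset.card_pos.2 hPfne
  have hNA : 1 ≤ (N : ℝ≥0∞) * ENNReal.ofReal A := by
    rw [← hsum1]
    calc ∑ k ∈ Pf, μ (dyCube d m k) ≤ Pf.card • ENNReal.ofReal A :=
          Finset.sum_le_card_nsmul _ _ _ (fun k hk => (hmain k ((hmemPf k).1 hk)).2)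
      _ = (N : ℝ≥0∞) * ENNReal.ofReal A := by rw [nsmul_eq_mul]
  have hNa : (N : ℝ≥0∞) * ENNReal.ofReal a ≤ 1 := by
    rw [← hsum1]
    calc (N:ℝ≥0∞) * ENNReal.ofReal a = Pf.card • ENNReal.ofReal a := (nsmul_eq_mul _ _).symm
      _ ≤ ∑ k ∈ Pf, μ (dyCube d m k) :=
          Finset.card_nsmul_le_sum _ _ _ (fun k hk => (hmain k ((hmemPf k).1 hk)).1)
  have hNAr : 1 ≤ (N:ℝ) * A := by
    have hfin : (N : ℝ≥0∞) * ENNReal.ofReal A ≠ ∞ :=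
      ENNReal.mul_ne_top (ENNReal.natCast_ne_top N) ENNReal.ofReal_ne_top
    have h := ENNReal.toReal_mono hfin hNA
    simpa [ENNReal.toReal_mul, ENNReal.toReal_ofReal hApos.le] using h
  have hNar : (N:ℝ) * a ≤ 1 := by
    have h := ENNReal.toReal_mono ENNReal.one_ne_top hNa
    simpa [ENNReal.toReal_mul, ENNReal.toReal_ofReal hapos.le] using h
  have hX : dySupp d μ = ⋃ k ∈ Pf, dyCube d m k := by
    ext x
    simp only [Set.mem_iUnion, exists_prop]
    constructor
    · intro hx
      exact ⟨dyIdx d m x, (hmemPf _).2 (hx m), mem_dyCube_dyIdx x⟩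
    · rintro ⟨k, hkP, hxQ⟩
      exact mem_dySupp_of_pos μ hμflat k ((hmemPf k).1 hkP) hxQ
  have hmeet : {k : Fin d → ℤ | (dyCube d m k ∩ dySupp d μ).Nonempty} = ↑Pf := by
    ext k
    simp only [Set.mem_setOf_eq, Finset.mem_coe]
    constructor
    · rintro ⟨x, hxQ, hxX⟩
      rw [hmemPf]
      have h := hxX m
      rwa [dyIdx_eq_of_mem hxQ] at h
    · intro hkP
      obtain ⟨x, hx⟩ := dyCube_nonempty d m k
      exact ⟨x, hx, mem_dySupp_of_pos μ hμflat k ((hmemPf k).1 hkP) hx⟩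
  have hcast : ((m:ℕ):ℝ) = (T:ℝ)*(ℓ:ℝ) := by rw [hmdef]; push_cast; ring
  refine ⟨fun j _ hjl k hk => part_i d T ℓ σ μ hμbox hreg j hjl k hk, ⟨?_, ?_, ?_⟩, ?_⟩
  · rw [hmeet]; exact Pf.finite_toSet
  · -- lower count bound
    rw [hmeet, Set.ncard_coe_finset]
    have e : Sg/(ℓ:ℝ) * ((m:ℕ):ℝ) = (T:ℝ)*Sg := by
      rw [hcast]; field_simp
    rw [e]
    have hAi : (2:ℝ)^((T:ℝ)*Sg) = A⁻¹ := by
      rw [hAdef, ← Real.rpow_neg (by norm_num : (0:ℝ) ≤ 2), neg_mul, neg_neg]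
    rw [hAi, inv_eq_one_div, div_le_iff₀ hApos]
    exact hNAr
  · -- upper count bound
    rw [hmeet, Set.ncard_coe_finset]
    have e2 : (Sg/(ℓ:ℝ) + 1/(T:ℝ)) * ((m:ℕ):ℝ) = (T:ℝ)*Sg + (ℓ:ℝ) := by
      rw [hcast]; field_simp
    rw [e2]
    have hai : (2:ℝ)^((T:ℝ)*Sg + (ℓ:ℝ)) = a⁻¹ := by
      rw [hadef, hAdef, ← Real.rpow_add (by norm_num : (0:ℝ) < 2),
        ← Real.rpow_neg (by norm_num : (0:ℝ) ≤ 2)]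
      congr 1
      ring
    rw [hai, ← one_div, le_div_iff₀ hapos]
    exact hNar
  · -- part (iii)
    set v := volume (dyCube d m (fun _ => 0)) with hvdef
    have hvol : ∀ k : Fin d → ℤ, volume (dyCube d m k) = v := by
      intro k; rw [hvdef, volume_dyCube, volume_dyCube]
    have hv0 : v ≠ 0 := (volume_dyCube_pos d m _).ne'
    have hvt : v ≠ ∞ := volume_dyCube_ne_top d m _
    have hdisjP : ∀ k ∈ Pf, ∀ k' ∈ Pf, k ≠ k' →
        Disjoint (dyCube d m k) (dyCube d m k') := fun k _ k' _ hne => dyCube_disjoint hne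
    have hvolX : volume (dySupp d μ) = (N:ℝ≥0∞) * v := by
      rw [hX, measure_biUnion_finset (fun k hk k' hk' hne => hdisjP k hk k' hk' hne)
        (fun k _ => measurableSet_dyCube d m k)]
      rw [Finset.sum_congr rfl (fun k _ => hvol k), Finset.sum_const, nsmul_eq_mul]
    set V : ℝ≥0∞ := (N:ℝ≥0∞) * v with hVdef
    have hV0 : V ≠ 0 := by
      rw [hVdef]
      exact mul_ne_zero (Nat.cast_ne_zero.2 (by omega)) hv0
    have hVt : V ≠ ∞ := ENNReal.mul_ne_top (ENNReal.natCast_ne_top N) hvt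
    have h2l0 : ((2:ℝ≥0∞)^ℓ) ≠ 0 := pow_ne_zero ℓ (by norm_num)
    have h2lt : ((2:ℝ≥0∞)^ℓ) ≠ ∞ := ENNReal.pow_ne_top (by norm_num)
    have hAa : ENNReal.ofReal A = (2:ℝ≥0∞)^ℓ * ENNReal.ofReal a := by
      have h1 : (2:ℝ)^(ℓ:ℕ) * (2:ℝ)^(-(ℓ:ℝ)) = 1 := by
        rw [← Real.rpow_natCast 2 ℓ, ← Real.rpow_add (by norm_num : (0:ℝ) < 2)]
        simp
      have h2 : A = (2:ℝ)^(ℓ:ℕ) * a := by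
        rw [hadef, ← mul_assoc, h1, one_mul]
      rw [h2, ENNReal.ofReal_mul (by positivity), ENNReal.ofReal_pow (by norm_num)]
      norm_num
    have hNQ : ∀ k ∈ Pf, (N:ℝ≥0∞) * μ (dyCube d m k) ≤ (2:ℝ≥0∞)^ℓ := by
      intro k hk
      calc (N:ℝ≥0∞) * μ (dyCube d m k) ≤ (N:ℝ≥0∞) * ENNReal.ofReal A :=
            mul_le_mul_right (hmain k ((hmemPf k).1 hk)).2 _
        _ = (2:ℝ≥0∞)^ℓ * ((N:ℝ≥0∞) * ENNReal.ofReal a) := by rw [hAa]; ring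
        _ ≤ (2:ℝ≥0∞)^ℓ * 1 := mul_le_mul_right hNa _
        _ = (2:ℝ≥0∞)^ℓ := mul_one _
    have hNQ' : ∀ k ∈ Pf, (1:ℝ≥0∞) ≤ (2:ℝ≥0∞)^ℓ * ((N:ℝ≥0∞) * μ (dyCube d m k)) := by
      intro k hk
      calc (1:ℝ≥0∞) ≤ (N:ℝ≥0∞) * ENNReal.ofReal A := hNA
        _ = (2:ℝ≥0∞)^ℓ * ((N:ℝ≥0∞) * ENNReal.ofReal a) := by rw [hAa]; ring
        _ ≤ (2:ℝ≥0∞)^ℓ * ((N:ℝ≥0∞) * μ (dyCube d m k)) :=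
            mul_le_mul_right (mul_le_mul_right (hmain k ((hmemPf k).1 hk)).1 _) _
    intro S hS
    have hq : ∀ k ∈ Pf, μ (S ∩ dyCube d m k) * v
        = μ (dyCube d m k) * volume (S ∩ dyCube d m k) := by
      intro k _
      obtain ⟨c, hc⟩ := hμflat k
      have hres : ∀ s : Set (Fin d → ℝ), MeasurableSet s →
          μ (s ∩ dyCube d m k) = c * volume (s ∩ dyCube d m k) := by
        intro s hs
        have h := congrArg (fun ν : Measure (Fin d → ℝ) => ν s) hc
        simpa [Measure.restrict_apply hs] using h
      have h1 := hres S hS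
      have h2 : μ (dyCube d m k) = c * v := by
        have h := hres Set.univ MeasurableSet.univ
        simpa [Set.univ_inter, hvol k] using h
      rw [h1, h2]
      ring
    have hμS : μ S = ∑ k ∈ Pf, μ (S ∩ dyCube d m k) := hcover S hS
    have hvSX : volume (S ∩ dySupp d μ) = ∑ k ∈ Pf, volume (S ∩ dyCube d m k) := by
      rw [hX, Set.inter_iUnion₂]
      exact measure_biUnion_finset
        (fun k _ k' _ hne => (dyCube_disjoint hne).mono Set.inter_subset_right
          Set.inter_subset_right)
        (fun k _ => hS.inter (measurableSet_dyCube d m k))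
    have MI1 : μ S * V ≤ (2:ℝ≥0∞)^ℓ * volume (S ∩ dySupp d μ) := by
      rw [hμS, hvSX, Finset.sum_mul, Finset.mul_sum]
      refine Finset.sum_le_sum ?_
      intro k hk
      calc μ (S ∩ dyCube d m k) * V
          = (N:ℝ≥0∞) * (μ (S ∩ dyCube d m k) * v) := by rw [hVdef]; ring
        _ = (N:ℝ≥0∞) * (μ (dyCube d m k) * volume (S ∩ dyCube d m k)) := by rw [hq k hk]
        _ = ((N:ℝ≥0∞) * μ (dyCube d m k)) * volume (S ∩ dyCube d m k) := by ring
        _ ≤ (2:ℝ≥0∞)^ℓ * volume (S ∩ dyCube d m k) := mul_le_mul_left (hNQ k hk) _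
    have MI2 : volume (S ∩ dySupp d μ) ≤ (2:ℝ≥0∞)^ℓ * (μ S * V) := by
      rw [hμS, hvSX, Finset.sum_mul, Finset.mul_sum]
      refine Finset.sum_le_sum ?_
      intro k hk
      calc volume (S ∩ dyCube d m k) = 1 * volume (S ∩ dyCube d m k) := (one_mul _).symm
        _ ≤ ((2:ℝ≥0∞)^ℓ * ((N:ℝ≥0∞) * μ (dyCube d m k))) * volume (S ∩ dyCube d m k) :=
            mul_le_mul_left (hNQ' k hk) _
        _ = (2:ℝ≥0∞)^ℓ * ((μ (dyCube d m k) * volume (S ∩ dyCube d m k)) * N) := by ring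
        _ = (2:ℝ≥0∞)^ℓ * ((μ (S ∩ dyCube d m k) * v) * N) := by rw [hq k hk]
        _ = (2:ℝ≥0∞)^ℓ * (μ (S ∩ dyCube d m k) * V) := by rw [hVdef]; ring
    rw [hvolX]
    constructor
    · calc ((2:ℝ≥0∞)^ℓ)⁻¹ * μ S
          = ((2:ℝ≥0∞)^ℓ)⁻¹ * ((μ S * V) * V⁻¹) := by
            rw [mul_assoc (μ S), ENNReal.mul_inv_cancel hV0 hVt, mul_one]
        _ ≤ ((2:ℝ≥0∞)^ℓ)⁻¹ * (((2:ℝ≥0∞)^ℓ * volume (S ∩ dySupp d μ)) * V⁻¹) :=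
            mul_le_mul_right (mul_le_mul_left MI1 _) _
        _ = V⁻¹ * volume (S ∩ dySupp d μ) := by
            rw [mul_assoc ((2:ℝ≥0∞)^ℓ), ← mul_assoc (((2:ℝ≥0∞)^ℓ)⁻¹),
              ENNReal.inv_mul_cancel h2l0 h2lt, one_mul, mul_comm]
    · calc V⁻¹ * volume (S ∩ dySupp d μ)
          ≤ V⁻¹ * ((2:ℝ≥0∞)^ℓ * (μ S * V)) := mul_le_mul_right MI2 _
        _ = ((2:ℝ≥0∞)^ℓ * μ S) * (V⁻¹ * V) := by ring
        _ = (2:ℝ≥0∞)^ℓ * μ S := by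
            rw [ENNReal.inv_mul_cancel hV0 hVt, mul_one]
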